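/- Let B_1, B_2, B_3 be independent {0,1}-valued random variables with P(B_i = 1) = p_i and 1/3 ≤ p_1 + p_2 + p_3 ≤ 5/3. Then P(B_1 + B_2 + B_3 = 1) ≥ 64/243. -/

import Mathlib

open MeasureTheory ProbabilityTheory
open scoped ENNReal

theorem real_ineq15 (a b c : ℝ) (ha0 : 0 ≤ a) (hb0 : 0 ≤ b) (hc0 : 0 ≤ c)
    (hlb : 1/3 ≤ a + b + c) (hub : a + b + c ≤ 5/3) :
    64/243 ≤ a*(1-b)*(1-c) + b*(1-a)*(1-c) + c*(1-a)*(1-b) := by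
  have key : ∀ x y z : ℝ, 0 ≤ z → z ≤ y → y ≤ x →
      0 ≤ x*(x-y)*(x-z) + y*(y-x)*(y-z) + z*(z-x)*(z-y) := by
    intro x y z h0 h1 h2
    nlinarith [mul_nonneg (sq_nonneg (x-y)) (by linarith : (0:ℝ) ≤ x + y - z),
      mul_nonneg (mul_nonneg h0 (by linarith : (0:ℝ) ≤ x - z)) (by linarith : (0:ℝ) ≤ y - z)]
  have big : ∀ x y z : ℝ, 2/3 ≤ x → 0 ≤ y → 0 ≤ z → x + y + z ≤ 5/3 →
      64/243 ≤ x*(1-y)*(1-z) + y*(1-x)*(1-z) + z*(1-x)*(1-y) := by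
    intro x y z hx hy hz hs
    nlinarith [mul_nonneg (by linarith : (0:ℝ) ≤ 3*x-2) (mul_nonneg hy hz),
      sq_nonneg (x - 5/6),
      mul_nonneg (by linarith : (0:ℝ) ≤ 2*x-1) (by linarith : (0:ℝ) ≤ 5/3-(x+y+z))]
  rcases le_total (a+b+c) (3/2) with hs | hs
  · have schur : 0 ≤ a*(a-b)*(a-c) + b*(b-a)*(b-c) + c*(c-a)*(c-b) := by
      rcases le_total a b with h | h <;> rcases le_total b c with h' | h' <;>
        rcases le_total a c with h'' | h''
      · nlinarith [key c b a ha0 h h']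
      · nlinarith [key c b a ha0 h h']
      · nlinarith [key b c a ha0 h'' h']
      · nlinarith [key b a c hc0 h'' h]
      · nlinarith [key c a b hb0 h h'']
      · nlinarith [key a c b hb0 h' h'']
      · nlinarith [key a b c hc0 h' h]
      · nlinarith [key a b c hc0 h' h]
    linarith [schur,
      mul_nonneg (by linarith : (0:ℝ) ≤ 3/2 - (a+b+c)) (sq_nonneg (a-b)),
      mul_nonneg (by linarith : (0:ℝ) ≤ 3/2 - (a+b+c)) (sq_nonneg (b-c)),
      mul_nonneg (by linarith : (0:ℝ) ≤ 3/2 - (a+b+c)) (sq_nonneg (a-c)),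
      mul_nonneg (by linarith : (0:ℝ) ≤ a+b+c - 1/3) (sq_nonneg (a+b+c-5/3)),
      mul_nonneg (by linarith : (0:ℝ) ≤ a+b+c - 1/3) (by linarith : (0:ℝ) ≤ 13 - 7*(a+b+c))]
  · rcases le_total (2/3) a with h | h
    · linarith [big a b c h hb0 hc0 hub]
    rcases le_total (2/3) b with h' | h'
    · linarith [big b a c h' ha0 hc0 (by linarith)]
    rcases le_total (2/3) c with h'' | h''
    · linarith [big c a b h'' ha0 hb0 (by linarith)]
    · linarith [mul_nonneg ha0 (mul_nonneg (by linarith : (0:ℝ) ≤ 2/3-b) (by linarith : (0:ℝ) ≤ 2/3-c)),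
        mul_nonneg hb0 (mul_nonneg (by linarith : (0:ℝ) ≤ 2/3-a) (by linarith : (0:ℝ) ≤ 2/3-c)),
        mul_nonneg hc0 (mul_nonneg (by linarith : (0:ℝ) ≤ 2/3-a) (by linarith : (0:ℝ) ≤ 2/3-b)),
        sq_nonneg (a-b), sq_nonneg (b-c), sq_nonneg (a-c),
        mul_nonneg (by linarith : (0:ℝ) ≤ 5/3-(a+b+c)) (by linarith : (0:ℝ) ≤ (a+b+c)-3/2)]

/-- If `B₁, B₂, B₃` are independent `{0,1}`-valued random variables
with success probabilities summing to a value in `[1/3, 5/3]`, then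
`P(B₁ + B₂ + B₃ = 1) ≥ 64/243`. -/
theorem stmt15 {Ω : Type*} [MeasurableSpace Ω] (P : Measure Ω) [IsProbabilityMeasure P]
    (B : Fin 3 → Ω → ℕ) (hmeas : ∀ i, Measurable (B i))
    (h01 : ∀ i ω, B i ω = 0 ∨ B i ω = 1)
    (hindep : iIndepFun B P)
    (p : Fin 3 → ℝ≥0∞) (hp : ∀ i, P {ω | B i ω = 1} = p i)
    (hsum_lb : 1 / 3 ≤ p 0 + p 1 + p 2) (hsum_ub : p 0 + p 1 + p 2 ≤ 5 / 3) :
    64 / 243 ≤ P {ω | B 0 ω + B 1 ω + B 2 ω = 1} := by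
  have key : ∀ v : Fin 3 → ℕ,
      P (B 0 ⁻¹' {v 0} ∩ B 1 ⁻¹' {v 1} ∩ B 2 ⁻¹' {v 2})
        = P (B 0 ⁻¹' {v 0}) * P (B 1 ⁻¹' {v 1}) * P (B 2 ⁻¹' {v 2}) := by
    intro v
    have h := hindep.meas_iInter (s := fun j => B j ⁻¹' {v j})
      (fun j => ⟨{v j}, measurableSet_singleton _, rfl⟩)
    rw [show (⋂ j, B j ⁻¹' {v j}) = B 0 ⁻¹' {v 0} ∩ B 1 ⁻¹' {v 1} ∩ B 2 ⁻¹' {v 2} by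
      ext ω; simp [Fin.forall_fin_succ, Set.mem_iInter, and_assoc]] at h
    rw [h, Fin.prod_univ_three]
  have h1p : ∀ i, P (B i ⁻¹' {1}) = p i := fun i => hp i
  have h0p : ∀ i, P (B i ⁻¹' {0}) = 1 - p i := by
    intro i
    have hcompl : B i ⁻¹' {(0:ℕ)} = (B i ⁻¹' {1})ᶜ := by
      ext ω
      have := h01 i ω
      simp only [Set.mem_preimage, Set.mem_singleton_iff, Set.mem_compl_iff]
      omega
    rw [hcompl, measure_compl ((hmeas i) (measurableSet_singleton 1)) (measure_ne_top P _),
      measure_univ, h1p i]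
  -- measurability of basic sets
  have hms : ∀ i (n : ℕ), MeasurableSet (B i ⁻¹' {n}) :=
    fun i n => (hmeas i) (measurableSet_singleton n)
  set S : ℕ → ℕ → ℕ → Set Ω := fun x y z => B 0 ⁻¹' {x} ∩ B 1 ⁻¹' {y} ∩ B 2 ⁻¹' {z} with hS
  have hmsS : ∀ x y z, MeasurableSet (S x y z) :=
    fun x y z => ((hms 0 x).inter (hms 1 y)).inter (hms 2 z)
  have hdecomp : {ω | B 0 ω + B 1 ω + B 2 ω = 1} = S 1 0 0 ∪ (S 0 1 0 ∪ S 0 0 1) := by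
    ext ω
    have h0 := h01 0 ω; have h1 := h01 1 ω; have h2 := h01 2 ω
    simp only [Set.mem_setOf_eq, hS, Set.mem_union, Set.mem_inter_iff, Set.mem_preimage,
      Set.mem_singleton_iff]
    omega
  have hd1 : Disjoint (S 1 0 0) (S 0 1 0 ∪ S 0 0 1) := by
    rw [Set.disjoint_left]
    rintro ω ⟨⟨hx, -⟩, -⟩ (⟨⟨hy, -⟩, -⟩ | ⟨⟨hy, -⟩, -⟩) <;>
      simp_all [Set.mem_preimage]
  have hd2 : Disjoint (S 0 1 0) (S 0 0 1) := by
    rw [Set.disjoint_left]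
    rintro ω ⟨⟨-, hx⟩, -⟩ ⟨⟨-, hy⟩, -⟩
    simp_all [Set.mem_preimage]
  have hPsum : P {ω | B 0 ω + B 1 ω + B 2 ω = 1}
      = P (S 1 0 0) + (P (S 0 1 0) + P (S 0 0 1)) := by
    rw [hdecomp, measure_union hd1 ((hmsS 0 1 0).union (hmsS 0 0 1)),
      measure_union hd2 (hmsS 0 0 1)]
  have e1 : P (S 1 0 0) = p 0 * (1 - p 1) * (1 - p 2) := by
    have := key ![1, 0, 0]
    simpa [h1p, h0p] using this
  have e2 : P (S 0 1 0) = (1 - p 0) * (p 1) * (1 - p 2) := by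
    have := key ![0, 1, 0]
    simpa [h1p, h0p] using this
  have e3 : P (S 0 0 1) = (1 - p 0) * (1 - p 1) * (p 2) := by
    have := key ![0, 0, 1]
    simpa [h1p, h0p] using this
  rw [hPsum, e1, e2, e3]
  -- convert to reals
  have hple : ∀ i, p i ≤ 1 := fun i => (hp i) ▸ prob_le_one
  have hne : ∀ i, p i ≠ ⊤ := fun i => (lt_of_le_of_lt (hple i) (by norm_num)).ne
  set a : Fin 3 → ℝ := fun i => (p i).toReal with ha
  have ha0 : ∀ i, 0 ≤ a i := fun i => ENNReal.toReal_nonneg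
  have ha1 : ∀ i, a i ≤ 1 := fun i => by
    rw [ha]; exact ENNReal.toReal_le_of_le_ofReal zero_le_one (by simpa using hple i)
  have hofr : ∀ i, p i = ENNReal.ofReal (a i) := fun i => (ENNReal.ofReal_toReal (hne i)).symm
  have hofr' : ∀ i, 1 - p i = ENNReal.ofReal (1 - a i) := by
    intro i
    rw [ENNReal.ofReal_sub _ (ha0 i), ENNReal.ofReal_one, hofr i]
  have hlb' : (1:ℝ)/3 ≤ a 0 + a 1 + a 2 := by
    have := hsum_lb
    rw [hofr 0, hofr 1, hofr 2, ← ENNReal.ofReal_add (ha0 0) (ha0 1),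
      ← ENNReal.ofReal_add (add_nonneg (ha0 0) (ha0 1)) (ha0 2)] at this
    have h13 : (1/3 : ℝ≥0∞) = ENNReal.ofReal (1/3) := by
      rw [ENNReal.ofReal_div_of_pos (by norm_num)]; norm_num
    rw [h13, ENNReal.ofReal_le_ofReal_iff (by positivity)] at this
    linarith
  have hub' : a 0 + a 1 + a 2 ≤ 5/3 := by
    have := hsum_ub
    rw [hofr 0, hofr 1, hofr 2, ← ENNReal.ofReal_add (ha0 0) (ha0 1),
      ← ENNReal.ofReal_add (add_nonneg (ha0 0) (ha0 1)) (ha0 2)] at this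
    have h53 : (5/3 : ℝ≥0∞) = ENNReal.ofReal (5/3) := by
      rw [ENNReal.ofReal_div_of_pos (by norm_num)]; norm_num
    rw [h53, ENNReal.ofReal_le_ofReal_iff (by norm_num)] at this
    linarith
  have hreal := real_ineq15 (a 0) (a 1) (a 2) (ha0 0) (ha0 1) (ha0 2) hlb' hub'
  have hsub0 : ∀ i, 0 ≤ 1 - a i := fun i => by linarith [ha1 i]
  calc (64/243 : ℝ≥0∞) = ENNReal.ofReal (64/243) := by
        rw [ENNReal.ofReal_div_of_pos (by norm_num)]; norm_num
    _ ≤ ENNReal.ofReal (a 0 * (1 - a 1) * (1 - a 2) + (1 - a 0) * a 1 * (1 - a 2)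
          + (1 - a 0) * (1 - a 1) * a 2) := by
        apply ENNReal.ofReal_le_ofReal
        have : a 0 * (1 - a 1) * (1 - a 2) + (1 - a 0) * a 1 * (1 - a 2)
            + (1 - a 0) * (1 - a 1) * a 2
            = a 0*(1-a 1)*(1-a 2) + a 1*(1-a 0)*(1-a 2) + a 2*(1-a 0)*(1-a 1) := by ring
        rw [this]; exact hreal
    _ = p 0 * (1 - p 1) * (1 - p 2) + ((1 - p 0) * p 1 * (1 - p 2)
          + (1 - p 0) * (1 - p 1) * p 2) := by
        have hmul : ∀ x y z : ℝ, 0 ≤ x → 0 ≤ y → 0 ≤ z →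
            ENNReal.ofReal x * ENNReal.ofReal y * ENNReal.ofReal z
              = ENNReal.ofReal (x * y * z) := by
          intro x y z hx hy hz
          rw [← ENNReal.ofReal_mul hx, ← ENNReal.ofReal_mul (mul_nonneg hx hy)]
        rw [hofr' 0, hofr' 1, hofr' 2, hofr 0, hofr 1, hofr 2,
          hmul _ _ _ (ha0 0) (hsub0 1) (hsub0 2),
          hmul _ _ _ (hsub0 0) (ha0 1) (hsub0 2),
          hmul _ _ _ (hsub0 0) (hsub0 1) (ha0 2),
          ← ENNReal.ofReal_add (mul_nonneg (mul_nonneg (hsub0 0) (ha0 1)) (hsub0 2))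
            (mul_nonneg (mul_nonneg (hsub0 0) (hsub0 1)) (ha0 2)),
          ← ENNReal.ofReal_add (mul_nonneg (mul_nonneg (ha0 0) (hsub0 1)) (hsub0 2))
            (add_nonneg (mul_nonneg (mul_nonneg (hsub0 0) (ha0 1)) (hsub0 2))
              (mul_nonneg (mul_nonneg (hsub0 0) (hsub0 1)) (ha0 2)))]
        exact congrArg ENNReal.ofReal (by ring)
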